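/- For every positive integer n there exists a bijection f from the set of noncrossing partitions of [n] = {1,...,n} onto the set of 132-avoiding permutations of [n] such that for every noncrossing partition x of [n] and every i with 1 ≤ i ≤ n-1, the index i is a descent of f(x) if and only if i+1 is the smallest element of the block of x that contains it. -/

import Mathlib

/-- A permutation `p` of `[n]` (modelled on `Fin n`, 0-based) is 132-avoiding if there
are no positions `i < j < k` with `p i < p k < p j`. -/
def Avoids132 {n : ℕ} (p : Equiv.Perm (Fin n)) : Prop :=
  ¬ ∃ i j k : Fin n, i < j ∧ j < k ∧ p i < p k ∧ p k < p j

/-- The descent set of `p`, in the 1-based convention of the paper: `i ∈ D(p)` iff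
`1 ≤ i ≤ n-1` and `p_i > p_{i+1}`, where `p_i` denotes the `i`-th entry of `p` in
1-based indexing (so `p_i = p ⟨i-1⟩` in 0-based indexing). -/
def DescentSet {n : ℕ} (p : Equiv.Perm (Fin n)) : Finset ℕ :=
  (Finset.range n).filter (fun i => ∃ h : 1 ≤ i ∧ i < n, p ⟨i, h.2⟩ < p ⟨i - 1, by omega⟩)

/-- `P` is a partition of `[n]` (modelled on `Fin n`): its blocks are nonempty and every
element lies in exactly one block. -/
def IsPartition {n : ℕ} (P : Finset (Finset (Fin n))) : Prop :=
  (∀ B ∈ P, B.Nonempty) ∧ ∀ i : Fin n, ∃! B, B ∈ P ∧ i ∈ B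

/-- A partition of `[n]` is noncrossing if there are no elements `a < b < c < d` with
`a, c` in one block and `b, d` in a different block. -/
def IsNoncrossing {n : ℕ} (P : Finset (Finset (Fin n))) : Prop :=
  ¬ ∃ a b c d : Fin n, a < b ∧ b < c ∧ c < d ∧
    ∃ B₁ ∈ P, ∃ B₂ ∈ P, B₁ ≠ B₂ ∧ a ∈ B₁ ∧ c ∈ B₁ ∧ b ∈ B₂ ∧ d ∈ B₂

namespace NCBij

open Finset

variable {n : ℕ}

/-! ### From a "block-min function" `g` to a permutation -/

def Aset (g : Fin n → Fin n) (k : Fin n) : Finset (Fin n) :=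
  univ.filter (fun j => g k < g j)

def Bset (g : Fin n → Fin n) (k : Fin n) : Finset (Fin n) :=
  univ.filter (fun j => g j = g k ∧ j < k)

lemma disj_AB (g : Fin n → Fin n) (k : Fin n) : Disjoint (Aset g k) (Bset g k) := by
  simp only [disjoint_left, Aset, Bset, mem_filter]
  rintro j ⟨-, h1⟩ ⟨-, h2, -⟩
  exact absurd (h2 ▸ h1) (lt_irrefl _)

lemma k_not_mem_AB (g : Fin n → Fin n) (k : Fin n) :
    k ∉ Aset g k ∪ Bset g k := by
  simp [Aset, Bset]

lemma pFun_bound (g : Fin n → Fin n) (k : Fin n) :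
    (Aset g k).card + (Bset g k).card < n := by
  rw [← card_union_of_disjoint (disj_AB g k)]
  calc (Aset g k ∪ Bset g k).card ≤ (univ.erase k).card := by
        apply card_le_card
        intro j hj
        rcases eq_or_ne j k with rfl | hne
        · exact absurd hj (k_not_mem_AB g _)
        · exact mem_erase.2 ⟨hne, mem_univ j⟩
    _ < n := by
        rw [card_erase_of_mem (mem_univ k), card_univ, Fintype.card_fin]
        have := k.is_lt; omega

def pFun (g : Fin n → Fin n) (k : Fin n) : Fin n :=
  ⟨(Aset g k).card + (Bset g k).card, pFun_bound g k⟩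

lemma pFun_lt_of_glt {g : Fin n → Fin n} {k k' : Fin n} (h : g k' < g k) :
    pFun g k < pFun g k' := by
  have hsub : Aset g k ∪ Bset g k ∪ {k} ⊆ Aset g k' := by
    intro j hj
    simp only [mem_union, mem_singleton, Aset, Bset, mem_filter, mem_univ, true_and] at hj ⊢
    rcases hj with (h1 | ⟨h2, -⟩) | rfl
    · exact h.trans h1
    · exact h2 ▸ h
    · exact h
  have hdisj2 : Disjoint (Aset g k ∪ Bset g k) ({k} : Finset (Fin n)) := by
    simp only [disjoint_singleton_right]
    exact k_not_mem_AB g k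
  have hcard : (Aset g k).card + (Bset g k).card + 1 ≤ (Aset g k').card := by
    calc (Aset g k).card + (Bset g k).card + 1
        = (Aset g k ∪ Bset g k ∪ {k}).card := by
          rw [card_union_of_disjoint hdisj2, card_union_of_disjoint (disj_AB g k),
            card_singleton]
      _ ≤ (Aset g k').card := card_le_card hsub
  show (Aset g k).card + (Bset g k).card < (Aset g k').card + (Bset g k').card
  omega

lemma pFun_lt_of_geq {g : Fin n → Fin n} {k k' : Fin n} (heq : g k = g k') (h : k < k') :
    pFun g k < pFun g k' := by
  have hA : Aset g k = Aset g k' := by simp [Aset, heq]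
  have hsub : Bset g k ∪ {k} ⊆ Bset g k' := by
    intro j hj
    simp only [mem_union, mem_singleton, Bset, mem_filter, mem_univ, true_and] at hj ⊢
    rcases hj with ⟨h2, h3⟩ | rfl
    · exact ⟨h2.trans heq, h3.trans h⟩
    · exact ⟨heq, h⟩
  have hdisj : Disjoint (Bset g k) ({k} : Finset (Fin n)) := by
    simp [disjoint_singleton_right, Bset]
  have hcard : (Bset g k).card + 1 ≤ (Bset g k').card := by
    calc (Bset g k).card + 1 = (Bset g k ∪ {k}).card := by
          rw [card_union_of_disjoint hdisj, card_singleton]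
      _ ≤ (Bset g k').card := card_le_card hsub
  show (Aset g k).card + (Bset g k).card < (Aset g k').card + (Bset g k').card
  rw [hA]; omega

/-- trichotomy for the comparison relation -/
lemma rel_total {g : Fin n → Fin n} {k k' : Fin n} (hne : k ≠ k') :
    (g k' < g k ∨ (g k = g k' ∧ k < k')) ∨ (g k < g k' ∨ (g k' = g k ∧ k' < k)) := by
  rcases lt_trichotomy (g k) (g k') with h | h | h
  · exact Or.inr (Or.inl h)
  · rcases lt_or_gt_of_ne hne with h' | h'
    · exact Or.inl (Or.inr ⟨h, h'⟩)
    · exact Or.inr (Or.inr ⟨h.symm, h'⟩)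
  · exact Or.inl (Or.inl h)

lemma pFun_lt_of_rel {g : Fin n → Fin n} {k k' : Fin n}
    (h : g k' < g k ∨ (g k = g k' ∧ k < k')) : pFun g k < pFun g k' := by
  rcases h with h | ⟨h1, h2⟩
  · exact pFun_lt_of_glt h
  · exact pFun_lt_of_geq h1 h2

lemma pFun_lt_iff {g : Fin n → Fin n} {k k' : Fin n} :
    pFun g k < pFun g k' ↔ (g k' < g k ∨ (g k = g k' ∧ k < k')) := by
  constructor
  · intro h
    by_contra hc
    rcases eq_or_ne k k' with rfl | hne
    · exact absurd h (lt_irrefl _)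
    · rcases rel_total hne with h' | h'
      · exact hc h'
      · exact absurd (pFun_lt_of_rel h').trans (by intro h2; exact absurd (h2 h) (lt_irrefl _))
  · exact pFun_lt_of_rel

lemma pFun_inj (g : Fin n → Fin n) : Function.Injective (pFun g) := by
  intro k k' h
  by_contra hne
  rcases rel_total hne with h' | h'
  · exact absurd (h ▸ pFun_lt_of_rel h') (lt_irrefl _)
  · exact absurd (h ▸ pFun_lt_of_rel h') (lt_irrefl _)

noncomputable def pPerm (g : Fin n → Fin n) : Equiv.Perm (Fin n) :=
  Equiv.ofBijective (pFun g) (Finite.injective_iff_bijective.mp (pFun_inj g))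

lemma pPerm_apply (g : Fin n → Fin n) (k : Fin n) : pPerm g k = pFun g k := rfl

lemma pPerm_avoids {g : Fin n → Fin n} (hle : ∀ k, g k ≤ k)
    (hnest : ∀ i j : Fin n, i < j → g j ≤ i → g j ≤ g i) :
    Avoids132 (pPerm g) := by
  rintro ⟨i, j, k, hij, hjk, h1, h2⟩

  replace h1 : pFun g i < pFun g k := h1
  replace h2 : pFun g k < pFun g j := h2
  rw [pFun_lt_iff] at h1 h2
  -- h1 : g k < g i ∨ (g i = g k ∧ i < k) ;  h2 : g j < g k ∨ (g k = g j ∧ k < j)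
  have hgjk : g j < g k := by
    rcases h2 with h | ⟨-, h⟩
    · exact h
    · exact absurd (h.trans hjk) (lt_irrefl _)
  have hki : g k ≤ g i := by
    rcases h1 with h | ⟨h, -⟩
    · exact le_of_lt h
    · exact le_of_eq h.symm
  have : g k ≤ j := le_of_lt (lt_of_le_of_lt (hki.trans (hle i)) hij)
  exact absurd (hnest j k hjk this) (not_le.mpr hgjk)


/-! ### From a permutation to a block-min function -/

def gSet (p : Equiv.Perm (Fin n)) (k : Fin n) : Finset (Fin n) :=
  univ.filter (fun m => m = k ∨ (m < k ∧ p m < p k))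

lemma k_mem_gSet (p : Equiv.Perm (Fin n)) (k : Fin n) : k ∈ gSet p k := by
  simp [gSet]

noncomputable def gFun (p : Equiv.Perm (Fin n)) (k : Fin n) : Fin n :=
  (gSet p k).min' ⟨k, k_mem_gSet p k⟩

lemma gFun_spec (p : Equiv.Perm (Fin n)) (k : Fin n) :
    gFun p k = k ∨ (gFun p k < k ∧ p (gFun p k) < p k) := by
  have := (gSet p k).min'_mem ⟨k, k_mem_gSet p k⟩
  exact (Finset.mem_filter.mp this).2

lemma gFun_min (p : Equiv.Perm (Fin n)) (k : Fin n) {m : Fin n}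
    (h : m ∈ gSet p k) : gFun p k ≤ m :=
  (gSet p k).min'_le m h

lemma gFun_not_mem (p : Equiv.Perm (Fin n)) (k : Fin n) {m : Fin n}
    (h : m < gFun p k) : ¬(m = k ∨ (m < k ∧ p m < p k)) := by
  intro hm
  exact absurd (gFun_min p k (by simpa [gSet] using hm)) (not_le.mpr h)

lemma gFun_le (p : Equiv.Perm (Fin n)) (k : Fin n) : gFun p k ≤ k := by
  rcases gFun_spec p k with h | ⟨h, -⟩
  · exact le_of_eq h
  · exact le_of_lt h

lemma gFun_idem (p : Equiv.Perm (Fin n)) (k : Fin n) :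
    gFun p (gFun p k) = gFun p k := by
  set m := gFun p k with hm
  apply le_antisymm (gFun_le p m)
  apply Finset.le_min'
  intro y hy
  simp only [gSet, mem_filter, mem_univ, true_and] at hy
  by_contra hlt
  push_neg at hlt
  rcases hy with rfl | ⟨h1, h2⟩
  · exact absurd hlt (lt_irrefl _)
  · -- y < m with p y < p m ; derive y ∈ gSet p k contradicting minimality of m
    have hyk : y < k := lt_of_lt_of_le hlt (gFun_le p k)
    have hpyk : p y < p k := by
      rcases gFun_spec p k with hs | ⟨-, hs⟩
      · rw [← hs]; exact h2
      · exact h2.trans hs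
    exact absurd (Or.inr ⟨hyk, hpyk⟩) (gFun_not_mem p k hlt)

lemma gFun_nested {p : Equiv.Perm (Fin n)} (hp : Avoids132 p) (i j : Fin n)
    (hij : i < j) (hle : gFun p j ≤ i) : gFun p j ≤ gFun p i := by
  by_contra hlt
  push_neg at hlt
  set m := gFun p j with hm
  set m₁ := gFun p i with hm₁
  -- m₁ < m ≤ i < j
  have hm₁i : m₁ < i := lt_of_lt_of_le hlt hle
  have h1 : p m₁ < p i := by
    rcases gFun_spec p i with hs | ⟨-, hs⟩
    · exact absurd (hs ▸ hm₁i) (lt_irrefl _)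
    · exact hs
  have hm₁j : m₁ < j := hm₁i.trans hij
  have h2 : ¬ p m₁ < p j := by
    intro hc
    exact absurd (Or.inr ⟨hm₁j, hc⟩) (gFun_not_mem p j hlt)
  have hne : p j ≠ p m₁ := fun hc => absurd (p.injective hc.symm) (ne_of_lt hm₁j)
  have h2' : p j < p m₁ := lt_of_le_of_ne (not_lt.mp h2) (hne)
  have h3 : p m < p j := by
    rcases gFun_spec p j with hs | ⟨-, hs⟩
    · exact absurd (hs ▸ (lt_of_le_of_lt hle hij)) (lt_irrefl _)
    · exact hs
  have v3 : (p m).val < (p j).val := h3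
  have v2 : (p j).val < (p m₁).val := h2'
  have v1 : (p m₁).val < (p i).val := h1
  rcases eq_or_lt_of_le hle with heq | hmi
  · rw [heq] at v3
    omega
  · exact hp ⟨m, i, j, hmi, hij, h3, Fin.lt_def.mpr (by omega)⟩

lemma gFun_pPerm {g : Fin n → Fin n} (hle : ∀ k, g k ≤ k)
    (hidem : ∀ k, g (g k) = g k) : gFun (pPerm g) = g := by
  funext k
  apply le_antisymm
  · apply gFun_min
    simp only [gSet, mem_filter, mem_univ, true_and]
    rcases eq_or_lt_of_le (hle k) with heq | hlt
    · exact Or.inl heq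
    · refine Or.inr ⟨hlt, ?_⟩
      show pFun g (g k) < pFun g k
      exact pFun_lt_of_rel (Or.inr ⟨hidem k, hlt⟩)
  · apply Finset.le_min'
    intro y hy
    simp only [gSet, mem_filter, mem_univ, true_and] at hy
    rcases hy with heq | ⟨h1, h2⟩
    · rw [← heq]; exact heq ▸ hle y
    · replace h2 : pFun g y < pFun g k := h2
      rw [pFun_lt_iff] at h2
      rcases h2 with h | ⟨h, -⟩
      · exact le_of_lt (lt_of_lt_of_le h (hle y))
      · exact (le_of_eq h.symm).trans (hle y)


/-! ### Two permutations with the same relative order are equal -/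

lemma perm_eq_of_order {p q : Equiv.Perm (Fin n)}
    (h : ∀ k k' : Fin n, q k < q k' ↔ p k < p k') : q = p := by
  have hsm : StrictMono (⇑q ∘ ⇑p.symm) := by
    intro a b hab
    apply (h _ _).mpr
    simpa using hab
  have hid : StrictMono (id : Fin n → Fin n) := strictMono_id
  have hrange : Set.range (⇑q ∘ ⇑p.symm) = Set.range (id : Fin n → Fin n) := by
    rw [Set.range_id, Set.range_eq_univ]
    exact q.surjective.comp p.symm.surjective
  have inst : WellFoundedLT (Fin n) := inferInstance
  have heq : ⇑q ∘ ⇑p.symm = id :=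
    @Set.range_injOn_strictMono (Fin n) (Fin n) _ _ inst (⇑q ∘ ⇑p.symm) hsm
      (id : Fin n → Fin n) hid hrange
  apply Equiv.ext
  intro x
  have := congrFun heq (p x)
  simpa using this

lemma pPerm_gFun {p : Equiv.Perm (Fin n)} (hp : Avoids132 p) : pPerm (gFun p) = p := by
  set g := gFun p with hg
  apply perm_eq_of_order
  have key : ∀ k k' : Fin n, (g k' < g k ∨ (g k = g k' ∧ k < k')) → p k < p k' := by
    intro k k' hrel
    rcases hrel with hlt | ⟨heq, hkk'⟩
    · -- g k' < g k  →  p k < p k'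
      set m' := g k' with hm'
      have hm'k : m' < k := lt_of_lt_of_le hlt (gFun_le p k)
      have hnm : ¬ p m' < p k := by
        intro hc
        exact absurd (Or.inr ⟨hm'k, hc⟩) (gFun_not_mem p k hlt)
      have hne : p k ≠ p m' := fun hc => absurd (p.injective hc) (ne_of_lt hm'k).symm
      have h1 : p k < p m' := lt_of_le_of_ne (not_lt.mp hnm) hne
      rcases gFun_spec p k' with hs | ⟨-, hs⟩
      · rw [← hg] at hs
        rw [hm', hs] at h1; exact h1
      · rw [← hg] at hs
        rw [← hm'] at hs
        exact Fin.lt_def.mpr (by have a1 : (p k).val < (p m').val := h1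
                                 have a2 : (p m').val < (p k').val := hs
                                 omega)
    · -- g k = g k' and k < k'  →  p k < p k'
      set m := g k with hm
      have hm2 : m = g k' := heq
      have h2 : p m < p k' := by
        rcases gFun_spec p k' with hs | ⟨-, hs⟩
        · -- g k' = k' : then m = k', but m = g k ≤ k < k', contradiction
          exfalso
          rw [← hg] at hs
          have hmk' : m < k' := lt_of_le_of_lt (hm ▸ gFun_le p k) hkk'
          rw [hm2, hs] at hmk'
          exact absurd hmk' (lt_irrefl _)
        · rw [← hg] at hs
          rw [← hm2] at hs; exact hs
      rcases eq_or_lt_of_le (hm ▸ gFun_le p k : m ≤ k) with heqk | hltk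
      · rw [heqk] at h2; exact h2
      · -- m < k : p m < p k, and if p k' < p k we get a 132 pattern (m,k,k')
        have h3 : p m < p k := by
          rcases gFun_spec p k with hs | ⟨-, hs⟩
          · exfalso; rw [← hg] at hs; rw [hm, hs] at hltk
            exact absurd hltk (lt_irrefl _)
          · rw [← hg] at hs; rw [← hm] at hs; exact hs
        by_contra hc
        have hne : p k' ≠ p k := fun hcc => absurd (p.injective hcc) (ne_of_lt hkk').symm
        have h4 : p k' < p k := lt_of_le_of_ne (not_lt.mp hc) hne
        exact hp ⟨m, k, k', hltk, hkk', h2, h4⟩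
  intro k k'
  constructor
  · intro hq
    replace hq : pFun g k < pFun g k' := hq
    rw [pFun_lt_iff] at hq
    exact key k k' hq
  · intro hp'
    have hne : k ≠ k' := fun hc => absurd (hc ▸ hp') (lt_irrefl _)
    rcases rel_total hne with hrel | hrel
    · exact pFun_lt_of_rel hrel
    · exact absurd (key k' k hrel) (not_lt.mpr (le_of_lt hp'))


/-! ### Partitions and block-min functions -/

noncomputable def blockOf (P : Finset (Finset (Fin n))) (hP : IsPartition P) (k : Fin n) :
    Finset (Fin n) :=
  ((hP.2 k).exists).choose

lemma blockOf_mem (P : Finset (Finset (Fin n))) (hP : IsPartition P) (k : Fin n) :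
    blockOf P hP k ∈ P :=
  ((hP.2 k).exists).choose_spec.1

lemma mem_blockOf (P : Finset (Finset (Fin n))) (hP : IsPartition P) (k : Fin n) :
    k ∈ blockOf P hP k :=
  ((hP.2 k).exists).choose_spec.2

lemma blockOf_unique {P : Finset (Finset (Fin n))} (hP : IsPartition P) {k : Fin n}
    {B : Finset (Fin n)} (hB : B ∈ P) (hk : k ∈ B) : B = blockOf P hP k :=
  (hP.2 k).unique ⟨hB, hk⟩ ⟨blockOf_mem P hP k, mem_blockOf P hP k⟩

noncomputable def gOfP (P : Finset (Finset (Fin n))) (hP : IsPartition P) (k : Fin n) :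
    Fin n :=
  (blockOf P hP k).min' ⟨k, mem_blockOf P hP k⟩

lemma gOfP_le (P : Finset (Finset (Fin n))) (hP : IsPartition P) (k : Fin n) :
    gOfP P hP k ≤ k :=
  Finset.min'_le _ _ (mem_blockOf P hP k)

lemma gOfP_mem (P : Finset (Finset (Fin n))) (hP : IsPartition P) (k : Fin n) :
    gOfP P hP k ∈ blockOf P hP k :=
  Finset.min'_mem _ _

lemma blockOf_gOfP (P : Finset (Finset (Fin n))) (hP : IsPartition P) (k : Fin n) :
    blockOf P hP (gOfP P hP k) = blockOf P hP k :=
  (blockOf_unique hP (blockOf_mem P hP k) (gOfP_mem P hP k)).symm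

lemma gOfP_idem (P : Finset (Finset (Fin n))) (hP : IsPartition P) (k : Fin n) :
    gOfP P hP (gOfP P hP k) = gOfP P hP k := by
  unfold gOfP
  congr 1
  exact blockOf_gOfP P hP k

lemma gOfP_eq_iff_same_block {P : Finset (Finset (Fin n))} (hP : IsPartition P)
    {j k : Fin n} : gOfP P hP j = gOfP P hP k ↔ blockOf P hP j = blockOf P hP k := by
  constructor
  · intro h
    have h1 : gOfP P hP j ∈ blockOf P hP j := gOfP_mem P hP j
    have h2 : gOfP P hP j ∈ blockOf P hP k := h ▸ gOfP_mem P hP k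
    rw [blockOf_unique hP (blockOf_mem P hP j) h1]
    exact (blockOf_unique hP (blockOf_mem P hP k) h2).symm ▸
      (blockOf_unique hP (blockOf_mem P hP j) h1).symm ▸ rfl
  · intro h
    unfold gOfP
    congr 1

lemma gOfP_nested {P : Finset (Finset (Fin n))} (hP : IsPartition P)
    (hNC : IsNoncrossing P) (i j : Fin n) (hij : i < j) (hle : gOfP P hP j ≤ i) :
    gOfP P hP j ≤ gOfP P hP i := by
  by_contra hlt
  push_neg at hlt
  -- gOfP i < gOfP j ≤ i < j
  have hBne : blockOf P hP i ≠ blockOf P hP j := by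
    intro hc
    have : gOfP P hP i = gOfP P hP j := gOfP_eq_iff_same_block hP |>.mpr hc
    exact absurd (this ▸ hlt) (lt_irrefl _)
  have hgj_ne_i : gOfP P hP j ≠ i := by
    intro hc
    have : i ∈ blockOf P hP j := hc ▸ gOfP_mem P hP j
    exact hBne ((blockOf_unique hP (blockOf_mem P hP j) this).symm)
  have hgji : gOfP P hP j < i := lt_of_le_of_ne hle hgj_ne_i
  exact hNC ⟨gOfP P hP i, gOfP P hP j, i, j, hlt, hgji, hij,
    blockOf P hP i, blockOf_mem P hP i, blockOf P hP j, blockOf_mem P hP j, hBne,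
    gOfP_mem P hP i, mem_blockOf P hP i, gOfP_mem P hP j, mem_blockOf P hP j⟩

def PofG (g : Fin n → Fin n) : Finset (Finset (Fin n)) :=
  univ.image (fun k => univ.filter (fun j => g j = g k))

lemma PofG_isPartition (g : Fin n → Fin n) : IsPartition (PofG g) := by
  constructor
  · intro B hB
    simp only [PofG, mem_image, mem_univ, true_and] at hB
    obtain ⟨k, rfl⟩ := hB
    exact ⟨k, by simp⟩
  · intro k
    refine ⟨univ.filter (fun j => g j = g k), ⟨?_, by simp⟩, ?_⟩
    · simp only [PofG, mem_image, mem_univ, true_and]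
      exact ⟨k, rfl⟩
    · rintro B ⟨hB, hkB⟩
      simp only [PofG, mem_image, mem_univ, true_and] at hB
      obtain ⟨k', rfl⟩ := hB
      simp only [mem_filter, mem_univ, true_and] at hkB
      ext j
      simp only [mem_filter, mem_univ, true_and, hkB]

lemma PofG_noncrossing {g : Fin n → Fin n} (hle : ∀ k, g k ≤ k)
    (hnest : ∀ i j : Fin n, i < j → g j ≤ i → g j ≤ g i) :
    IsNoncrossing (PofG g) := by
  rintro ⟨a, b, c, d, hab, hbc, hcd, B₁, hB₁, B₂, hB₂, hne, haB, hcB, hbB, hdB⟩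
  simp only [PofG, mem_image, mem_univ, true_and] at hB₁ hB₂
  obtain ⟨x, rfl⟩ := hB₁
  obtain ⟨y, rfl⟩ := hB₂
  simp only [mem_filter, mem_univ, true_and] at haB hcB hbB hdB
  have hac : g a = g c := haB.trans hcB.symm
  have hbd : g b = g d := hbB.trans hdB.symm
  have hgagb : g a ≠ g b := by
    intro hc
    apply hne
    ext j
    simp only [mem_filter, mem_univ, true_and]
    rw [← haB, ← hbB, hc]
  have h1 : g c ≤ b := le_of_lt (lt_of_le_of_lt (hac ▸ hle a) hab)
  have h2 : g c ≤ g b := hnest b c hbc h1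
  have h3 : g d ≤ c := le_of_lt (lt_of_le_of_lt (hbd ▸ hle b) hbc)
  have h4 : g d ≤ g c := hnest c d hcd h3
  rw [← hbd] at h4
  rw [hac] at hgagb
  exact hgagb (le_antisymm h2 h4)


lemma gOfP_min (P : Finset (Finset (Fin n))) (hP : IsPartition P) {k j : Fin n}
    (hj : j ∈ blockOf P hP k) : gOfP P hP k ≤ j :=
  Finset.min'_le _ _ hj

lemma fiber_eq_blockOf (P : Finset (Finset (Fin n))) (hP : IsPartition P) (k : Fin n) :
    univ.filter (fun j => gOfP P hP j = gOfP P hP k) = blockOf P hP k := by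
  ext j
  simp only [mem_filter, mem_univ, true_and]
  constructor
  · intro h
    have := (gOfP_eq_iff_same_block hP).mp h
    exact this ▸ mem_blockOf P hP j
  · intro h
    exact (gOfP_eq_iff_same_block hP).mpr (blockOf_unique hP (blockOf_mem P hP k) h).symm

lemma PofG_gOfP (P : Finset (Finset (Fin n))) (hP : IsPartition P) :
    PofG (gOfP P hP) = P := by
  ext B
  simp only [PofG, mem_image, mem_univ, true_and]
  constructor
  · rintro ⟨k, rfl⟩
    rw [fiber_eq_blockOf P hP k]
    exact blockOf_mem P hP k
  · intro hB
    obtain ⟨k, hk⟩ := hP.1 B hB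
    refine ⟨k, ?_⟩
    rw [fiber_eq_blockOf P hP k]
    exact (blockOf_unique hP hB hk).symm

lemma gOfP_PofG {g : Fin n → Fin n} (hle : ∀ k, g k ≤ k)
    (hidem : ∀ k, g (g k) = g k) (hP : IsPartition (PofG g)) :
    gOfP (PofG g) hP = g := by
  funext k
  have hfib : blockOf (PofG g) hP k = univ.filter (fun j => g j = g k) := by
    refine (blockOf_unique hP ?_ ?_).symm
    · simp only [PofG, mem_image, mem_univ, true_and]
      exact ⟨k, rfl⟩
    · simp
  apply le_antisymm
  · apply Finset.min'_le
    rw [hfib]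
    simp only [mem_filter, mem_univ, true_and]
    exact hidem k
  · apply Finset.le_min'
    intro y hy
    rw [hfib] at hy
    simp only [mem_filter, mem_univ, true_and] at hy
    exact hy ▸ hle y

lemma mem_descentSet_iff (p : Equiv.Perm (Fin n)) {i : ℕ} (h1 : 1 ≤ i) (h2 : i < n)
    (hi1 : i - 1 < n) :
    i ∈ DescentSet p ↔ p ⟨i, h2⟩ < p ⟨i - 1, hi1⟩ := by
  simp only [DescentSet, Finset.mem_filter, Finset.mem_range]
  constructor
  · rintro ⟨-, ⟨h, hlt⟩⟩
    exact hlt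
  · intro h
    exact ⟨h2, ⟨⟨h1, h2⟩, h⟩⟩

end NCBij

/-- For every positive integer `n` there is a bijection `f` from the set of
noncrossing partitions of `[n]` onto the set of 132-avoiding permutations of `[n]` such that
for every noncrossing partition `x` and every `i` with `1 ≤ i ≤ n-1`, the index `i` is a
descent of `f x` iff the element `i+1` (which is `⟨i⟩ : Fin n` in our 0-based model) is the
smallest element of the block of `x` containing it. -/
theorem stmt_0 (n : ℕ) (hn : 0 < n) :
    ∃ f : {P : Finset (Finset (Fin n)) // IsPartition P ∧ IsNoncrossing P} ≃
          {p : Equiv.Perm (Fin n) // Avoids132 p},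
      ∀ (x : {P : Finset (Finset (Fin n)) // IsPartition P ∧ IsNoncrossing P})
        (i : ℕ) (h1 : 1 ≤ i) (h2 : i < n),
        (i ∈ DescentSet (f x).val ↔
          ∀ B ∈ x.val, (⟨i, h2⟩ : Fin n) ∈ B → ∀ j ∈ B, (⟨i, h2⟩ : Fin n) ≤ j) := by
  classical
  refine ⟨{ toFun := fun x => ⟨NCBij.pPerm (NCBij.gOfP x.1 x.2.1),
              NCBij.pPerm_avoids (fun k => NCBij.gOfP_le x.1 x.2.1 k)
                (fun i j hij hle => NCBij.gOfP_nested x.2.1 x.2.2 i j hij hle)⟩,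
            invFun := fun y => ⟨NCBij.PofG (NCBij.gFun y.1),
              NCBij.PofG_isPartition _,
              NCBij.PofG_noncrossing (fun k => NCBij.gFun_le y.1 k)
                (fun i j hij hle => NCBij.gFun_nested y.2 i j hij hle)⟩,
            left_inv := fun x => Subtype.ext (by
              show NCBij.PofG (NCBij.gFun (NCBij.pPerm (NCBij.gOfP x.1 x.2.1))) = x.1
              rw [NCBij.gFun_pPerm (fun k => NCBij.gOfP_le x.1 x.2.1 k)
                (fun k => NCBij.gOfP_idem x.1 x.2.1 k)]
              exact NCBij.PofG_gOfP x.1 x.2.1),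
            right_inv := fun y => Subtype.ext (by
              show NCBij.pPerm (NCBij.gOfP (NCBij.PofG (NCBij.gFun y.1)) _) = y.1
              rw [NCBij.gOfP_PofG (fun k => NCBij.gFun_le y.1 k)
                (fun k => NCBij.gFun_idem y.1 k)]
              exact NCBij.pPerm_gFun y.2) }, ?_⟩
  intro x i h1 h2
  have hi1 : i - 1 < n := by omega
  have hfin : (⟨i - 1, hi1⟩ : Fin n) < ⟨i, h2⟩ := by
    rw [Fin.mk_lt_mk]; omega
  have hiff1 : ((NCBij.pPerm (NCBij.gOfP x.1 x.2.1)) ⟨i, h2⟩ <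
      (NCBij.pPerm (NCBij.gOfP x.1 x.2.1)) ⟨i - 1, hi1⟩) ↔
      NCBij.gOfP x.1 x.2.1 ⟨i - 1, hi1⟩ < NCBij.gOfP x.1 x.2.1 ⟨i, h2⟩ := by
    constructor
    · intro h
      replace h : NCBij.pFun (NCBij.gOfP x.1 x.2.1) ⟨i, h2⟩ <
          NCBij.pFun (NCBij.gOfP x.1 x.2.1) ⟨i - 1, hi1⟩ := h
      rw [NCBij.pFun_lt_iff] at h
      rcases h with h | ⟨-, h⟩
      · exact h
      · exact absurd (h.trans hfin) (lt_irrefl _)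
    · intro h
      exact NCBij.pFun_lt_of_rel (Or.inl h)
  have hiff2 : (NCBij.gOfP x.1 x.2.1 ⟨i - 1, hi1⟩ < NCBij.gOfP x.1 x.2.1 ⟨i, h2⟩) ↔
      NCBij.gOfP x.1 x.2.1 ⟨i, h2⟩ = ⟨i, h2⟩ := by
    constructor
    · intro h
      by_contra hne
      have hlt : NCBij.gOfP x.1 x.2.1 ⟨i, h2⟩ < ⟨i, h2⟩ :=
        lt_of_le_of_ne (NCBij.gOfP_le x.1 x.2.1 _) hne
      have hval : (NCBij.gOfP x.1 x.2.1 ⟨i, h2⟩).val < i := hlt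
      have hle' : NCBij.gOfP x.1 x.2.1 ⟨i, h2⟩ ≤ ⟨i - 1, hi1⟩ := by
        rw [Fin.le_def]; simp; omega
      exact absurd (NCBij.gOfP_nested x.2.1 x.2.2 _ _ hfin hle') (not_le.mpr h)
    · intro h
      rw [h]
      exact lt_of_le_of_lt (NCBij.gOfP_le x.1 x.2.1 _) hfin
  have hiff3 : (NCBij.gOfP x.1 x.2.1 ⟨i, h2⟩ = ⟨i, h2⟩) ↔
      (∀ B ∈ x.val, (⟨i, h2⟩ : Fin n) ∈ B → ∀ j ∈ B, (⟨i, h2⟩ : Fin n) ≤ j) := by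
    constructor
    · intro hg B hB hiB j hj
      have hBeq : B = NCBij.blockOf x.1 x.2.1 ⟨i, h2⟩ := NCBij.blockOf_unique x.2.1 hB hiB
      have := NCBij.gOfP_min x.1 x.2.1 (hBeq ▸ hj)
      exact hg ▸ this
    · intro hall
      refine le_antisymm (NCBij.gOfP_le x.1 x.2.1 _) ?_
      exact hall _ (NCBij.blockOf_mem x.1 x.2.1 ⟨i, h2⟩)
        (NCBij.mem_blockOf x.1 x.2.1 ⟨i, h2⟩) _ (NCBij.gOfP_mem x.1 x.2.1 ⟨i, h2⟩)
  exact (NCBij.mem_descentSet_iff _ h1 h2 hi1).trans (hiff1.trans (hiff2.trans hiff3))
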